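/- arXiv:1908.05660 — 2 statements merged into one kernel-verified Lean document; each statement's English description precedes it below -/
import Mathlib

section
/- Let φ₁(z) = tanh'(z/√2)·e^{-z²/2} as a function of a complex variable z. For every β with 0 ≤ β ≤ √2·π/4, for all z = x + iy with |y| ≤ β < √2·π/4, one has |φ₁(z)| ≤ 40·e^{β²}·sec²(β)·e^{-√(β²-y²)·|x|}. -/
set_option maxHeartbeats 1000000 in
theorem phi1_strip_bound (β x y : ℝ)
    (hβ0 : 0 ≤ β) (hβ : β ≤ Real.sqrt 2 * Real.pi / 4) (hy : |y| ≤ β) :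
    ‖(1 / (Complex.cosh ((x + y * Complex.I) / Real.sqrt 2)) ^ 2) *
        Complex.exp (-(x + y * Complex.I) ^ 2 / 2)‖ ≤
      40 * Real.exp (β ^ 2) * (1 / Real.cos β) ^ 2 *
        Real.exp (-Real.sqrt (β ^ 2 - y ^ 2) * |x|) := by
  have h2 : (0:ℝ) < Real.sqrt 2 := by positivity
  have h2sq : Real.sqrt 2 ^ 2 = 2 := Real.sq_sqrt (by norm_num)
  have hs2lt : Real.sqrt 2 < 2 := by nlinarith [Real.sqrt_nonneg 2]
  set u : ℝ := x / Real.sqrt 2 with hu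
  set v : ℝ := y / Real.sqrt 2 with hv
  have hz : ((x : ℂ) + y * Complex.I) / (Real.sqrt 2 : ℝ) = (u : ℂ) + v * Complex.I := by
    rw [hu, hv]; push_cast; field_simp
  have hcosh : Complex.cosh ((u : ℂ) + v * Complex.I)
      = ((Real.cosh u * Real.cos v : ℝ) : ℂ) + ((Real.sinh u * Real.sin v : ℝ) : ℂ) * Complex.I := by
    rw [Complex.cosh_add, Complex.cosh_mul_I, Complex.sinh_mul_I]
    push_cast
    ring
  have habs2 : ‖Complex.cosh ((u : ℂ) + v * Complex.I)‖ ^ 2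
      = (Real.cosh u * Real.cos v) ^ 2 + (Real.sinh u * Real.sin v) ^ 2 := by
    rw [hcosh, Complex.sq_norm, Complex.normSq_add_mul_I]
  -- |v| ≤ π/4
  have hpi : (0:ℝ) < Real.pi := Real.pi_pos
  have hvle : |v| ≤ Real.pi / 4 := by
    rw [hv, abs_div, abs_of_pos h2, div_le_iff₀ h2]
    nlinarith [abs_nonneg y]
  -- cos v ≥ √2/2
  have hcosv : Real.sqrt 2 / 2 ≤ Real.cos v := by
    rw [← Real.cos_abs]
    rw [← Real.cos_pi_div_four]
    apply Real.cos_le_cos_of_nonneg_of_le_pi (abs_nonneg v) _ hvle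
    linarith
  -- |cosh|² ≥ 1/2
  have hcoshu : (1:ℝ) ≤ Real.cosh u := Real.one_le_cosh u
  have hlb : (1/2 : ℝ) ≤ ‖Complex.cosh ((u : ℂ) + v * Complex.I)‖ ^ 2 := by
    rw [habs2]
    have h1 : Real.sqrt 2 / 2 ≤ Real.cosh u * Real.cos v := by nlinarith
    nlinarith [sq_nonneg (Real.sinh u * Real.sin v), h1, h2sq]
  have habspos : (0:ℝ) < ‖Complex.cosh ((u : ℂ) + v * Complex.I)‖ ^ 2 := by
    linarith
  -- exp part
  have hexp : ‖Complex.exp (-((x:ℂ) + y * Complex.I) ^ 2 / 2)‖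
      = Real.exp ((y ^ 2 - x ^ 2) / 2) := by
    rw [Complex.norm_exp]
    congr 1
    simp only [Complex.div_re, Complex.normSq, pow_two, Complex.neg_re, Complex.neg_im,
      Complex.add_re, Complex.add_im, Complex.mul_re, Complex.mul_im, Complex.I_re,
      Complex.I_im, Complex.ofReal_re, Complex.ofReal_im, MonoidWithZeroHom.coe_mk,
      ZeroHom.coe_mk]
    norm_num
    ring
  -- cos β > 0
  have hβlt : β < Real.pi / 2 := by nlinarith
  have hcosβ : 0 < Real.cos β := Real.cos_pos_of_mem_Ioo ⟨by linarith, hβlt⟩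
  have hsec : (1:ℝ) ≤ (1 / Real.cos β) ^ 2 := by
    rw [div_pow, one_pow, le_div_iff₀ (by positivity : (0:ℝ) < Real.cos β ^ 2), one_mul]
    nlinarith [Real.cos_le_one β]
  -- exponent inequality
  have hy2 : y ^ 2 ≤ β ^ 2 := by nlinarith [abs_nonneg y, sq_abs y]
  have hsnn : 0 ≤ β ^ 2 - y ^ 2 := by linarith
  have hssq : Real.sqrt (β ^ 2 - y ^ 2) ^ 2 = β ^ 2 - y ^ 2 := Real.sq_sqrt hsnn
  have hexple : Real.exp ((y ^ 2 - x ^ 2) / 2)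
      ≤ Real.exp (β ^ 2) * Real.exp (-Real.sqrt (β ^ 2 - y ^ 2) * |x|) := by
    rw [← Real.exp_add]
    apply Real.exp_le_exp.mpr
    nlinarith [sq_nonneg (|x| - Real.sqrt (β ^ 2 - y ^ 2)), sq_abs x]
  -- assemble
  rw [norm_mul, norm_div, norm_one, norm_pow, hz, hexp]
  have key : 1 / ‖Complex.cosh ((u : ℂ) + v * Complex.I)‖ ^ 2 ≤ 2 := by
    rw [div_le_iff₀ habspos]; linarith
  calc 1 / ‖Complex.cosh ((u : ℂ) + v * Complex.I)‖ ^ 2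
        * Real.exp ((y ^ 2 - x ^ 2) / 2)
      ≤ 2 * (Real.exp (β ^ 2) * Real.exp (-Real.sqrt (β ^ 2 - y ^ 2) * |x|)) := by
        apply mul_le_mul key hexple (Real.exp_nonneg _) (by norm_num)
    _ ≤ 40 * Real.exp (β ^ 2) * (1 / Real.cos β) ^ 2 *
        Real.exp (-Real.sqrt (β ^ 2 - y ^ 2) * |x|) := by
        nlinarith [Real.exp_pos (β^2), Real.exp_pos (-Real.sqrt (β ^ 2 - y ^ 2) * |x|),
          mul_pos (Real.exp_pos (β^2)) (Real.exp_pos (-Real.sqrt (β ^ 2 - y ^ 2) * |x|))]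
end

section
/- If the Hermite coefficients of a function f ∈ L²(ℝ, μ) satisfy |f_k| ≤ C·e^{-(π/(4√2))·√(2k+1)} for all k, then the tail sum ∑_{k=p+1}^{∞} |f_k|² ≤ C²·(32/π²)·((π/(4√2))·√(2p+1) + 1)·e^{-(π/(4√2))·√(2p+1)}; in particular the truncation error in L²(μ) is O(√p · e^{-(π/(4√2))√p}). -/
open Real Finset

noncomputable def bconst : ℝ := Real.pi / (2 * Real.sqrt 2)

lemma bconst_pos : 0 < bconst := by
  unfold bconst
  have := Real.pi_pos
  positivity

noncomputable def gfun (x : ℝ) : ℝ :=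
  (bconst * Real.sqrt (2 * x + 1) + 1) / bconst ^ 2 * Real.exp (-bconst * Real.sqrt (2 * x + 1))

lemma gfun_nonneg (x : ℝ) : 0 ≤ gfun x := by
  unfold gfun
  have hb := bconst_pos
  have hs : 0 ≤ Real.sqrt (2 * x + 1) := Real.sqrt_nonneg _
  positivity

lemma gfun_hasDeriv (x : ℝ) (hx : 0 ≤ x) :
    HasDerivAt gfun (-(Real.exp (-bconst * Real.sqrt (2 * x + 1)))) x := by
  have hb := bconst_pos
  have hpos : (0:ℝ) < 2 * x + 1 := by linarith
  have hu : 0 < Real.sqrt (2 * x + 1) := Real.sqrt_pos.2 hpos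
  have hsd : HasDerivAt (fun y : ℝ => Real.sqrt (2 * y + 1)) (1 / Real.sqrt (2 * x + 1)) x := by
    have h2 : HasDerivAt (fun y : ℝ => 2 * y + 1) 2 x := by
      simpa using ((hasDerivAt_id x).const_mul (2:ℝ)).add_const 1
    have h3 := (Real.hasDerivAt_sqrt (ne_of_gt hpos)).comp x h2
    refine h3.congr_deriv ?_
    field_simp
  set u := Real.sqrt (2 * x + 1) with hudef
  have hA : HasDerivAt (fun y : ℝ => (bconst * Real.sqrt (2 * y + 1) + 1) / bconst ^ 2)
      ((bconst * (1 / u)) / bconst ^ 2) x := ((hsd.const_mul bconst).add_const 1).div_const _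
  have hB : HasDerivAt (fun y : ℝ => Real.exp (-bconst * Real.sqrt (2 * y + 1)))
      (Real.exp (-bconst * u) * (-bconst * (1 / u))) x := (hsd.const_mul (-bconst)).exp
  have hAB := hA.mul hB
  refine hAB.congr_deriv ?_
  have hbne : bconst ≠ 0 := ne_of_gt hb
  have hune : u ≠ 0 := ne_of_gt hu
  field_simp
  ring

lemma gfun_step (k : ℕ) :
    Real.exp (-bconst * Real.sqrt (2 * ((k : ℝ) + 1) + 1)) ≤ gfun k - gfun ((k : ℝ) + 1) := by
  have hlt : (k : ℝ) < (k : ℝ) + 1 := by linarith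
  obtain ⟨c, hc, hder⟩ := exists_hasDerivAt_eq_slope gfun
    (fun x => -(Real.exp (-bconst * Real.sqrt (2 * x + 1)))) hlt
    (fun x hx => by
      have hx0 : (0:ℝ) ≤ x := le_trans (Nat.cast_nonneg k) hx.1
      exact (gfun_hasDeriv x hx0).continuousAt.continuousWithinAt)
    (fun x hx => gfun_hasDeriv x (le_trans (Nat.cast_nonneg k) (le_of_lt hx.1)))
  have hc2 : c ≤ (k : ℝ) + 1 := le_of_lt hc.2
  have hc0 : (0:ℝ) ≤ c := le_trans (Nat.cast_nonneg k) (le_of_lt hc.1)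
  have hslope : gfun k - gfun ((k : ℝ) + 1) = Real.exp (-bconst * Real.sqrt (2 * c + 1)) := by
    have h1 : ((k : ℝ) + 1 - k) = 1 := by ring
    rw [h1, div_one] at hder
    linarith
  rw [hslope]
  apply Real.exp_le_exp.2
  have hb := bconst_pos
  have hsq : Real.sqrt (2 * c + 1) ≤ Real.sqrt (2 * ((k:ℝ) + 1) + 1) :=
    Real.sqrt_le_sqrt (by linarith)
  nlinarith

lemma sum_exp_le (p M : ℕ) :
    ∑ j ∈ Finset.range M, Real.exp (-bconst * Real.sqrt (2 * ((p : ℝ) + 1 + j) + 1)) ≤ gfun p := by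
  have hstep : ∀ j ∈ Finset.range M,
      Real.exp (-bconst * Real.sqrt (2 * ((p : ℝ) + 1 + j) + 1))
        ≤ gfun ((p : ℝ) + j) - gfun ((p : ℝ) + j + 1) := by
    intro j _
    have := gfun_step (p + j)
    have hc : ((p + j : ℕ) : ℝ) = (p : ℝ) + j := by push_cast; ring
    rw [hc] at this
    convert this using 4 <;> ring
  calc ∑ j ∈ Finset.range M, Real.exp (-bconst * Real.sqrt (2 * ((p : ℝ) + 1 + j) + 1))
      ≤ ∑ j ∈ Finset.range M, (gfun ((p : ℝ) + j) - gfun ((p : ℝ) + j + 1)) :=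
        Finset.sum_le_sum hstep
    _ = gfun ((p : ℝ) + 0) - gfun ((p : ℝ) + M) := by
        have := Finset.sum_range_sub' (fun i : ℕ => gfun ((p : ℝ) + i)) M
        simp only [Nat.cast_add, Nat.cast_one, Nat.cast_zero, ← add_assoc] at this ⊢
        simpa using this
    _ ≤ gfun p := by
        have := gfun_nonneg ((p : ℝ) + M)
        simp only [add_zero]
        linarith

theorem hermite_tail_bound (f : ℕ → ℝ) (C : ℝ) (hC : 0 < C) (p : ℕ)
    (h : ∀ k, |f k| ≤ C * Real.exp (-(Real.pi / (4 * Real.sqrt 2)) * Real.sqrt (2 * k + 1))) :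
    (∑' k : ℕ, if p + 1 ≤ k then (f k) ^ 2 else 0) ≤
      C ^ 2 * (32 / Real.pi ^ 2) *
        ((Real.pi / (4 * Real.sqrt 2)) * Real.sqrt (2 * p + 1) + 1) *
        Real.exp (-(Real.pi / (4 * Real.sqrt 2)) * Real.sqrt (2 * p + 1)) := by
  have hpi := Real.pi_pos
  have hs2 : (0:ℝ) < Real.sqrt 2 := Real.sqrt_pos.2 (by norm_num)
  set a : ℝ := Real.pi / (4 * Real.sqrt 2) with ha
  have ha0 : 0 < a := by positivity
  have hb : bconst = 2 * a := by
    rw [ha]; unfold bconst; field_simp; ring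
  have hsp : (0:ℝ) ≤ Real.sqrt (2 * p + 1) := Real.sqrt_nonneg _
  have hRHS0 : (0:ℝ) ≤ C ^ 2 * (32 / Real.pi ^ 2) *
      (a * Real.sqrt (2 * p + 1) + 1) * Real.exp (-a * Real.sqrt (2 * p + 1)) := by
    positivity
  -- key comparison: C^2 * gfun p ≤ RHS
  have hkey : C ^ 2 * gfun p ≤ C ^ 2 * (32 / Real.pi ^ 2) *
      (a * Real.sqrt (2 * p + 1) + 1) * Real.exp (-a * Real.sqrt (2 * p + 1)) := by
    set s := Real.sqrt (2 * (p:ℝ) + 1) with hsdef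
    have hgp : gfun p = (2 * a * s + 1) / (2 * a) ^ 2 * Real.exp (-(2 * a) * s) := by
      unfold gfun; rw [hb]
    have hb2 : (2 * a) ^ 2 = Real.pi ^ 2 / 8 := by
      have h2 : Real.sqrt 2 ^ 2 = 2 := Real.sq_sqrt (by norm_num)
      have hne : Real.sqrt 2 ≠ 0 := ne_of_gt hs2
      rw [ha]
      field_simp
      nlinarith [h2]
    have hexp : Real.exp (-(2 * a) * s) ≤ Real.exp (-a * s) * 1 := by
      rw [mul_one]
      apply Real.exp_le_exp.2
      nlinarith
    have hcoef : (2 * a * s + 1) / (2 * a) ^ 2 ≤ (32 / Real.pi ^ 2) * (a * s + 1) := by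
      rw [hb2]
      rw [div_le_iff₀ (by positivity : (0:ℝ) < Real.pi ^ 2 / 8)]
      have : (32 / Real.pi ^ 2) * (a * s + 1) * (Real.pi ^ 2 / 8) = 4 * (a * s + 1) := by
        field_simp; ring
      rw [this]
      nlinarith
    have hgle : gfun p ≤ (32 / Real.pi ^ 2) * (a * s + 1) * Real.exp (-a * s) := by
      rw [hgp]
      calc (2 * a * s + 1) / (2 * a) ^ 2 * Real.exp (-(2 * a) * s)
          ≤ ((32 / Real.pi ^ 2) * (a * s + 1)) * Real.exp (-(2 * a) * s) := by
            apply mul_le_mul_of_nonneg_right hcoef (Real.exp_nonneg _)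
        _ ≤ ((32 / Real.pi ^ 2) * (a * s + 1)) * Real.exp (-a * s) := by
            apply mul_le_mul_of_nonneg_left _ (by positivity)
            apply Real.exp_le_exp.2
            nlinarith
    calc C ^ 2 * gfun p ≤ C ^ 2 * ((32 / Real.pi ^ 2) * (a * s + 1) * Real.exp (-a * s)) :=
          mul_le_mul_of_nonneg_left hgle (by positivity)
      _ = C ^ 2 * (32 / Real.pi ^ 2) * (a * s + 1) * Real.exp (-a * s) := by ring
  -- term bound
  have hterm : ∀ k : ℕ, f k ^ 2 ≤ C ^ 2 * Real.exp (-bconst * Real.sqrt (2 * k + 1)) := by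
    intro k
    have h1 := h k
    have h2 : 0 ≤ C * Real.exp (-a * Real.sqrt (2 * k + 1)) := by positivity
    have h3 : f k ^ 2 = |f k| ^ 2 := (sq_abs _).symm
    rw [h3]
    calc |f k| ^ 2 ≤ (C * Real.exp (-a * Real.sqrt (2 * k + 1))) ^ 2 := by
          apply pow_le_pow_left₀ (abs_nonneg _) h1
      _ = C ^ 2 * Real.exp (-bconst * Real.sqrt (2 * k + 1)) := by
          rw [mul_pow, sq (Real.exp _), ← Real.exp_add, hb]
          ring_nf
  by_cases hsum : Summable (fun k : ℕ => if p + 1 ≤ k then f k ^ 2 else 0)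
  · apply Summable.tsum_le_of_sum_le hsum
    intro t
    obtain ⟨N, hN⟩ := t.exists_nat_subset_range
    have h1 : ∑ k ∈ t, (if p + 1 ≤ k then f k ^ 2 else 0)
        ≤ ∑ k ∈ Finset.range N, (if p + 1 ≤ k then f k ^ 2 else 0) := by
      apply Finset.sum_le_sum_of_subset_of_nonneg hN
      intro k _ _
      split_ifs
      · positivity
      · exact le_refl 0
    have h2 : ∑ k ∈ Finset.range N, (if p + 1 ≤ k then f k ^ 2 else 0) ≤ C ^ 2 * gfun p := by
      rcases le_or_gt N (p + 1) with hN' | hN'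
      · have : ∑ k ∈ Finset.range N, (if p + 1 ≤ k then f k ^ 2 else 0) = 0 := by
          apply Finset.sum_eq_zero
          intro k hk
          have hkN := Finset.mem_range.1 hk
          rw [if_neg (by omega : ¬ p + 1 ≤ k)]
        rw [this]
        have := gfun_nonneg (p : ℝ)
        positivity
      · have hsplit : ∑ k ∈ Finset.range N, (if p + 1 ≤ k then f k ^ 2 else 0)
            = ∑ k ∈ Finset.Ico (p + 1) N, f k ^ 2 := by
          rw [Finset.range_eq_Ico,
            ← Finset.sum_Ico_consecutive _ (Nat.zero_le (p + 1)) (le_of_lt hN')]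
          rw [Finset.sum_eq_zero (fun k hk => by
            rw [if_neg]; have := (Finset.mem_Ico.1 hk).2; omega)]
          rw [zero_add]
          apply Finset.sum_congr rfl
          intro k hk
          rw [if_pos (Finset.mem_Ico.1 hk).1]
        rw [hsplit]
        have hbound : ∑ k ∈ Finset.Ico (p + 1) N, f k ^ 2
            ≤ ∑ k ∈ Finset.Ico (p + 1) N, C ^ 2 * Real.exp (-bconst * Real.sqrt (2 * k + 1)) :=
          Finset.sum_le_sum (fun k _ => hterm k)
        have hre : ∑ k ∈ Finset.Ico (p + 1) N, C ^ 2 * Real.exp (-bconst * Real.sqrt (2 * k + 1))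
            = C ^ 2 * ∑ j ∈ Finset.range (N - (p + 1)),
                Real.exp (-bconst * Real.sqrt (2 * ((p : ℝ) + 1 + j) + 1)) := by
          rw [Finset.sum_Ico_eq_sum_range, Finset.mul_sum]
          apply Finset.sum_congr rfl
          intro j _
          push_cast
          ring_nf
        have hfin := sum_exp_le p (N - (p + 1))
        calc ∑ k ∈ Finset.Ico (p + 1) N, f k ^ 2
            ≤ ∑ k ∈ Finset.Ico (p + 1) N, C ^ 2 * Real.exp (-bconst * Real.sqrt (2 * k + 1)) :=
              hbound
          _ = C ^ 2 * ∑ j ∈ Finset.range (N - (p + 1)),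
                Real.exp (-bconst * Real.sqrt (2 * ((p : ℝ) + 1 + j) + 1)) := hre
          _ ≤ C ^ 2 * gfun p := mul_le_mul_of_nonneg_left hfin (by positivity)
    exact le_trans h1 (le_trans h2 hkey)
  · rw [tsum_eq_zero_of_not_summable hsum]
    exact hRHS0
end
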